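/- If the pseudo-inertia J = [[Σ, h], [hᵀ, m]] is positive definite, then m > 0, Σ is positive definite, and the recovered rotational inertia Ī = Tr(Σ)·I − Σ satisfies: all eigenvalues of Ī are positive and satisfy the strict triangle inequalities after shifting to the center of mass, i.e., Ī_C = Ī − (1/m)(‖h‖²I − h hᵀ) has eigenvalues D₁, D₂, D₃ with Dᵢ > 0 and Dⱼ + Dₖ > Dᵢ. -/

import Mathlib

open Matrix

private lemma quadJ (S : Matrix (Fin 3) (Fin 3) ℝ) (h : Fin 3 → ℝ) (m : ℝ)
    (x : Fin 3 → ℝ) (c : ℝ) :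
    (Sum.elim x (fun _ : Fin 1 => c)) ⬝ᵥ
      ((Matrix.fromBlocks S (fun i (_ : Fin 1) => h i) (fun (_ : Fin 1) j => h j)
        (fun _ _ => m)) *ᵥ Sum.elim x (fun _ : Fin 1 => c)) =
      x ⬝ᵥ (S *ᵥ x) + 2 * c * (h ⬝ᵥ x) + m * c ^ 2 := by
  erw [fromBlocks_mulVec, sumElim_dotProduct_sumElim]
  have h1 : (Sum.elim x (fun _ : Fin 1 => c)) ∘ Sum.inl = x := rfl
  have h2 : (Sum.elim x (fun _ : Fin 1 => c)) ∘ Sum.inr = fun _ : Fin 1 => c := rfl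
  rw [h1, h2]
  simp [mulVec, dotProduct, Fin.sum_univ_three]
  ring

private lemma vecMulVec_mulVec' (h x : Fin 3 → ℝ) :
    (vecMulVec h h) *ᵥ x = (h ⬝ᵥ x) • h := by
  funext i
  simp only [mulVec, vecMulVec_apply, dotProduct, Pi.smul_apply, smul_eq_mul,
    Finset.sum_mul, Finset.mul_sum]
  exact Finset.sum_congr rfl fun j _ => by ring

/-- If the pseudo-inertia `J = [[Σ, h], [hᵀ, m]]` is positive definite, then `m > 0`,
`Σ` is positive definite, and the center-of-mass inertia
`Ī_C = (Tr(Σ)·I − Σ) − (1/m)(‖h‖² I − h hᵀ)` has eigenvalues `D₁, D₂, D₃` with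
`Dᵢ > 0` and `Dⱼ + Dₖ > Dᵢ` for distinct indices. -/
theorem pseudo_inertia_posDef_consequences (S : Matrix (Fin 3) (Fin 3) ℝ)
    (h : Fin 3 → ℝ) (m : ℝ) (hS : S.IsSymm)
    (hJ : (Matrix.fromBlocks S (fun i (_ : Fin 1) => h i) (fun (_ : Fin 1) j => h j)
      (fun _ _ => m)).PosDef) :
    0 < m ∧ S.PosDef ∧
      ∃ hH : ((S.trace • (1 : Matrix (Fin 3) (Fin 3) ℝ) - S) -
          (1 / m) • ((h ⬝ᵥ h) • (1 : Matrix (Fin 3) (Fin 3) ℝ) - vecMulVec h h)).IsHermitian,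
        (∀ i : Fin 3, 0 < hH.eigenvalues i) ∧
        ∀ i j k : Fin 3, i ≠ j → j ≠ k → i ≠ k →
          hH.eigenvalues j + hH.eigenvalues k > hH.eigenvalues i := by
  have hSe : ∀ i j, S j i = S i j := by
    intro i j
    conv_lhs => rw [← hS]
    simp
  -- m > 0
  have hm : 0 < m := by
    have hy : (Sum.elim (0 : Fin 3 → ℝ) (fun _ : Fin 1 => (1:ℝ))) ≠ 0 := by
      intro hc
      have := congr_fun hc (Sum.inr 0)
      simp at this
    have := hJ.dotProduct_mulVec_pos hy
    rw [star_trivial, quadJ] at this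
    simpa using this
  have hm' : m ≠ 0 := ne_of_gt hm
  have hSherm : S.IsHermitian := by
    show Sᴴ = S
    ext i j
    simp only [conjTranspose_apply, star_trivial]
    exact hSe i j
  -- S is positive definite
  have hSpd : S.PosDef := by
    refine Matrix.PosDef.of_dotProduct_mulVec_pos hSherm fun x hx => ?_
    have hy : (Sum.elim x (fun _ : Fin 1 => (0:ℝ))) ≠ 0 := by
      intro hc
      exact hx (funext fun i => congr_fun hc (Sum.inl i))
    have := hJ.dotProduct_mulVec_pos hy
    rw [star_trivial, quadJ] at this
    simpa using this
  -- Schur complement B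
  set B : Matrix (Fin 3) (Fin 3) ℝ := S - m⁻¹ • vecMulVec h h with hBdef
  have hBquad : ∀ x : Fin 3 → ℝ, x ⬝ᵥ (B *ᵥ x) = x ⬝ᵥ (S *ᵥ x) - m⁻¹ * (h ⬝ᵥ x) ^ 2 := by
    intro x
    rw [hBdef, sub_mulVec, dotProduct_sub, smul_mulVec, vecMulVec_mulVec',
      dotProduct_smul, dotProduct_smul]
    rw [dotProduct_comm x h]
    simp only [smul_eq_mul]
    ring
  have hBpd : B.PosDef := by
    refine Matrix.PosDef.of_dotProduct_mulVec_pos ?_ ?_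
    · show Bᴴ = B
      rw [hBdef]
      ext i j
      simp only [conjTranspose_apply, star_trivial, Matrix.sub_apply, Matrix.smul_apply, vecMulVec_apply,
        smul_eq_mul]
      rw [hSe i j]
      ring
    · intro x hx
      rw [star_trivial, hBquad]
      have hy : (Sum.elim x (fun _ : Fin 1 => -(h ⬝ᵥ x) / m)) ≠ 0 := by
        intro hc
        exact hx (funext fun i => congr_fun hc (Sum.inl i))
      have := hJ.dotProduct_mulVec_pos hy
      rw [star_trivial, quadJ] at this
      have he : x ⬝ᵥ (S *ᵥ x) + 2 * (-(h ⬝ᵥ x) / m) * (h ⬝ᵥ x) + m * (-(h ⬝ᵥ x) / m) ^ 2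
          = x ⬝ᵥ (S *ᵥ x) - m⁻¹ * (h ⬝ᵥ x) ^ 2 := by
        field_simp
        ring
      rw [he] at this
      exact this
  set t : ℝ := B.trace with htdef
  -- the goal matrix equals t • 1 - B
  have hGM : (S.trace • (1 : Matrix (Fin 3) (Fin 3) ℝ) - S) -
      (1 / m) • ((h ⬝ᵥ h) • (1 : Matrix (Fin 3) (Fin 3) ℝ) - vecMulVec h h) =
      t • (1 : Matrix (Fin 3) (Fin 3) ℝ) - B := by
    have hvv : (vecMulVec h h).trace = h ⬝ᵥ h := by
      simp [Matrix.trace, Matrix.diag, vecMulVec_apply, dotProduct]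
    have htr : t = S.trace - m⁻¹ * (h ⬝ᵥ h) := by
      rw [htdef, hBdef, trace_sub, trace_smul, hvv, smul_eq_mul]
    rw [htr, hBdef, one_div, smul_sub, sub_smul, smul_smul]
    abel
  rw [hGM]
  have hMherm : (t • (1 : Matrix (Fin 3) (Fin 3) ℝ) - B).IsHermitian := by
    show _ᴴ = _
    rw [conjTranspose_sub, conjTranspose_smul, conjTranspose_one, hBpd.1, star_trivial]
  -- each eigenvalue is < t
  have hDlt : ∀ i : Fin 3, hMherm.eigenvalues i < t := by
    intro i
    set v : Fin 3 → ℝ := ⇑(hMherm.eigenvectorBasis i) with hvdef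
    have hv0 : v ≠ 0 := by
      have := hMherm.eigenvectorBasis.orthonormal.ne_zero i
      intro hc
      apply this
      ext j
      exact congr_fun hc j
    have hMv : (t • (1 : Matrix (Fin 3) (Fin 3) ℝ) - B) *ᵥ v
        = hMherm.eigenvalues i • v := hMherm.mulVec_eigenvectorBasis i
    have hBv : B *ᵥ v = (t - hMherm.eigenvalues i) • v := by
      have e : (t • (1 : Matrix (Fin 3) (Fin 3) ℝ) - B) *ᵥ v = t • v - B *ᵥ v := by
        conv_lhs => rw [sub_mulVec, smul_mulVec, one_mulVec]
      rw [e] at hMv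
      rw [sub_smul, ← hMv]
      abel
    have hpos := hBpd.dotProduct_mulVec_pos hv0
    rw [star_trivial, hBv, dotProduct_smul, smul_eq_mul] at hpos
    have hvv : 0 ≤ v ⬝ᵥ v := Finset.sum_nonneg fun j _ => mul_self_nonneg (v j)
    nlinarith
  -- sum of eigenvalues is trace M = 2t
  have hsum' : ∑ i, hMherm.eigenvalues i = 2 * t := by
    have hspec := hMherm.spectral_theorem
    have htr : (t • (1 : Matrix (Fin 3) (Fin 3) ℝ) - B).trace = ∑ i, hMherm.eigenvalues i := by
      simpa using hMherm.trace_eq_sum_eigenvalues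
    have htr2 : (t • (1 : Matrix (Fin 3) (Fin 3) ℝ) - B).trace = 2 * t := by
      rw [trace_sub, trace_smul, trace_one, ← htdef]
      simp [Fintype.card_fin]
      ring
    rw [← htr, htr2]
  refine ⟨hm, hSpd, hMherm, ?_, ?_⟩
  · intro i
    have h1 : hMherm.eigenvalues i + ∑ j ∈ Finset.univ.erase i, hMherm.eigenvalues j = 2 * t := by
      rw [Finset.add_sum_erase _ _ (Finset.mem_univ i), hsum']
    have hne : (Finset.univ.erase i).Nonempty := by
      apply Finset.card_pos.mp
      rw [Finset.card_erase_of_mem (Finset.mem_univ i), Finset.card_univ, Fintype.card_fin]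
      norm_num
    have h2 : ∑ j ∈ Finset.univ.erase i, hMherm.eigenvalues j
        < ∑ _j ∈ Finset.univ.erase i, t :=
      Finset.sum_lt_sum_of_nonempty hne fun j _ => hDlt j
    have h3 : ∑ _j ∈ Finset.univ.erase i, (t : ℝ) = 2 * t := by
      rw [Finset.sum_const, Finset.card_erase_of_mem (Finset.mem_univ i), Finset.card_univ,
        Fintype.card_fin]
      norm_num
    linarith
  · intro i j k hij hjk hik
    have huniv : (Finset.univ : Finset (Fin 3)) = {i, j, k} := by
      refine (Finset.eq_univ_of_card _ ?_).symm
      rw [Finset.card_insert_of_notMem (by simp [hij, hik]),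
        Finset.card_insert_of_notMem (by simp [hjk]), Finset.card_singleton, Fintype.card_fin]
    have hsum3 : hMherm.eigenvalues i + hMherm.eigenvalues j + hMherm.eigenvalues k = 2 * t := by
      have := hsum'
      rw [huniv, Finset.sum_insert (by simp [hij, hik]), Finset.sum_insert (by simp [hjk]),
        Finset.sum_singleton] at this
      linarith
    have := hDlt i
    linarith
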